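/- If X = X* ∈ L(H_n ⊗ H_m) is k-block positive with maximal eigenvalue λ_max and minimal eigenvalue λ_min, then λ_min / λ_max ≥ 1 − m/k. -/

import Mathlib

noncomputable section
open scoped BigOperators
open Matrix

/-- Inner product (conjugate-linear in the first argument). -/
def ip {ι : Type*} [Fintype ι] (w v : ι → ℂ) : ℂ := ∑ p, star (w p) * v p

/-- Euclidean norm. -/
def nrm {ι : Type*} [Fintype ι] (v : ι → ℂ) : ℝ := Real.sqrt (ip v v).re

/-- Elementary tensor (product vector). -/
def prodVec {n m : ℕ} (a : Fin n → ℂ) (b : Fin m → ℂ) : Fin n × Fin m → ℂ :=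
  fun p => a p.1 * b p.2

/-- Schmidt rank at most `k`: `v` is a sum of `k` product vectors. -/
def SRle {n m : ℕ} (k : ℕ) (v : Fin n × Fin m → ℂ) : Prop :=
  ∃ (a : Fin k → Fin n → ℂ) (b : Fin k → Fin m → ℂ), v = ∑ i, prodVec (a i) (b i)

/-- The `k`-th vector norm. -/
def vecNorm {n m : ℕ} (k : ℕ) (v : Fin n × Fin m → ℂ) : ℝ :=
  sSup {r | ∃ w, nrm w = 1 ∧ SRle k w ∧ r = ‖ip w v‖}

/-- The `k`-th operator norm. -/
def opNorm {n m : ℕ} (k : ℕ) (X : Matrix (Fin n × Fin m) (Fin n × Fin m) ℂ) : ℝ :=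
  sSup {r | ∃ v w, nrm v = 1 ∧ nrm w = 1 ∧ SRle k v ∧ SRle k w ∧
    r = ‖ip w (X.mulVec v)‖}

/-- Rank-one operator `|w⟩⟨v|`. -/
def outer {ι : Type*} (w v : ι → ℂ) : Matrix ι ι ℂ := Matrix.of fun p q => w p * star (v q)

/-- `k`-block positivity. -/
def BlockPos {n m : ℕ} (k : ℕ) (Y : Matrix (Fin n × Fin m) (Fin n × Fin m) ℂ) : Prop :=
  ∀ v : Fin n × Fin m → ℂ, nrm v = 1 → SRle k v → 0 ≤ (ip v (Y.mulVec v)).re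

/-- Schmidt number at most `k`. -/
def SNle {n m : ℕ} (k : ℕ) (ρ : Matrix (Fin n × Fin m) (Fin n × Fin m) ℂ) : Prop :=
  ∃ (N : ℕ) (p : Fin N → ℝ) (v : Fin N → Fin n × Fin m → ℂ),
    (∀ i, 0 ≤ p i) ∧ (∑ i, p i) = 1 ∧ (∀ i, nrm (v i) = 1) ∧ (∀ i, SRle k (v i)) ∧
    ρ = ∑ i, (p i : ℂ) • outer (v i) (v i)

section helpers
variable {N : Type*} [Fintype N] [DecidableEq N]

omit [DecidableEq N] in
lemma ip_comm (w v : N → ℂ) : ip w v = star (ip v w) := by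
  simp only [ip, star_sum, star_mul', star_star]
  exact Finset.sum_congr rfl fun p _ => mul_comm _ _

omit [DecidableEq N] in
lemma ip_smul_smul (r : ℂ) (x y : N → ℂ) :
    ip (fun p => r * x p) (fun p => r * y p) = star r * r * ip x y := by
  rw [ip, ip, Finset.mul_sum]
  refine Finset.sum_congr rfl fun p _ => ?_
  rw [star_mul']
  ring

lemma complete_of_orth (v : N → N → ℂ)
    (horth : ∀ i j, ip (v i) (v j) = if i = j then 1 else 0) :
    ∀ p q, (∑ j, v j p * star (v j q)) = if p = q then 1 else 0 := by
  classical
  set V : Matrix N N ℂ := Matrix.of fun p i => v i p with hV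
  have h1 : Vᴴ * V = 1 := by
    ext i j
    have := horth i j
    simpa [Matrix.mul_apply, Matrix.conjTranspose_apply, hV, Matrix.one_apply, ip] using this
  have h2 : V * Vᴴ = 1 := mul_eq_one_comm.mp h1
  intro p q
  have h3 : (V * Vᴴ) p q = (1 : Matrix N N ℂ) p q := by rw [h2]
  simpa [Matrix.mul_apply, Matrix.conjTranspose_apply, hV, Matrix.one_apply] using h3

lemma expand_of_complete (v : N → N → ℂ)
    (hcomp : ∀ p q, (∑ j, v j p * star (v j q)) = if p = q then 1 else 0)
    (x : N → ℂ) (p : N) : x p = ∑ j, ip (v j) x * v j p := by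
  classical
  calc x p = ∑ q, (if p = q then (1:ℂ) else 0) * x q := by simp
    _ = ∑ q, (∑ j, v j p * star (v j q)) * x q := by
        refine Finset.sum_congr rfl fun q _ => by rw [hcomp]
    _ = ∑ q, ∑ j, v j p * star (v j q) * x q := by
        refine Finset.sum_congr rfl fun q _ => Finset.sum_mul _ _ _
    _ = ∑ j, ∑ q, v j p * star (v j q) * x q := Finset.sum_comm
    _ = ∑ j, ip (v j) x * v j p := by
        refine Finset.sum_congr rfl fun j _ => ?_
        rw [ip, Finset.sum_mul]
        refine Finset.sum_congr rfl fun q _ => by ring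

lemma parseval_of_complete (v : N → N → ℂ)
    (hcomp : ∀ p q, (∑ j, v j p * star (v j q)) = if p = q then 1 else 0)
    (x y : N → ℂ) : ip x y = ∑ j, star (ip (v j) x) * ip (v j) y := by
  classical
  have hs : ∀ j, star (ip (v j) x) = ∑ p, star (x p) * v j p := by
    intro j
    rw [ip, star_sum]
    exact Finset.sum_congr rfl fun p _ => by rw [star_mul', star_star]; ring
  refine Eq.symm ?_
  calc ∑ j, star (ip (v j) x) * ip (v j) y
      = ∑ j, ∑ p, ∑ q, star (x p) * v j p * (star (v j q) * y q) := by
        refine Finset.sum_congr rfl fun j _ => ?_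
        rw [hs, ip, Finset.sum_mul]
        refine Finset.sum_congr rfl fun p _ => ?_
        rw [Finset.mul_sum]
    _ = ∑ p, ∑ q, ∑ j, star (x p) * v j p * (star (v j q) * y q) := by
        rw [Finset.sum_comm]
        exact Finset.sum_congr rfl fun p _ => Finset.sum_comm
    _ = ∑ p, ∑ q, star (x p) * y q * (∑ j, v j p * star (v j q)) := by
        refine Finset.sum_congr rfl fun p _ => Finset.sum_congr rfl fun q _ => ?_
        rw [Finset.mul_sum]
        exact Finset.sum_congr rfl fun j _ => by ring
    _ = ip x y := by
        rw [ip]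
        refine Finset.sum_congr rfl fun p _ => ?_
        rw [Finset.sum_eq_single p (fun q _ hq => by rw [hcomp]; simp [Ne.symm hq]) (by simp)]
        rw [hcomp]; simp

end helpers

/-- for a k-block positive Hermitian operator,
`λ_min / λ_max ≥ 1 - m/k`. -/
theorem stmt18 {n m k : ℕ} (hmn : m ≤ n) (hk1 : 1 ≤ k) (hkm : k ≤ m)
    (X : Matrix (Fin n × Fin m) (Fin n × Fin m) ℂ) (hX : X.IsHermitian)
    (μ : Fin n × Fin m → ℝ) (v : Fin n × Fin m → Fin n × Fin m → ℂ)
    (horth : ∀ i j, ip (v i) (v j) = if i = j then 1 else 0)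
    (heig : ∀ i, X.mulVec (v i) = (μ i : ℂ) • v i)
    (lmax lmin : ℝ) (hmax : IsGreatest (Set.range μ) lmax)
    (hmin : IsLeast (Set.range μ) lmin) (hlmax : 0 < lmax)
    (hbp : BlockPos k X) :
    1 - (m : ℝ) / k ≤ lmin / lmax := by
  classical
  haveI : NeZero m := ⟨by omega⟩
  obtain ⟨i0, hi0⟩ := hmin.1
  set u : Fin n × Fin m → ℂ := v i0 with hu
  have hcomp := complete_of_orth v horth
  have huu : ip u u = 1 := by simpa using horth i0 i0
  have hm1 : 1 ≤ m := le_trans hk1 hkm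
  have hmR : (0:ℝ) < m := by exact_mod_cast hm1
  have hkR : (0:ℝ) < k := by exact_mod_cast hk1
  -- column weights
  set c : Fin m → ℝ := fun j => ∑ p : Fin n, Complex.normSq (u (p, j)) with hc
  have hc_nonneg : ∀ j, 0 ≤ c j := fun j => Finset.sum_nonneg fun p _ => Complex.normSq_nonneg _
  have hsum_c : ∑ j, c j = 1 := by
    have h2 : (ip u u).re = ∑ x : Fin n × Fin m, Complex.normSq (u x) := by
      rw [ip, Complex.re_sum]
      refine Finset.sum_congr rfl fun x _ => ?_
      have h4 : star (u x) * u x = ((Complex.normSq (u x) : ℝ) : ℂ) := by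
        rw [mul_comm]; exact Complex.mul_conj _
      rw [h4, Complex.ofReal_re]
    have h1 : (1:ℝ) = ∑ x : Fin n × Fin m, Complex.normSq (u x) := by
      rw [← h2, huu]; simp
    rw [Fintype.sum_prod_type] at h1
    rw [hc]
    rw [Finset.sum_comm] at h1
    exact h1.symm
  -- the sliding window average argument
  set ι : Fin k → Fin m := Fin.castLE hkm with hι
  have hιinj : Function.Injective ι := Fin.castLE_injective hkm
  have havg : ∃ t : Fin m, (k:ℝ)/m ≤ ∑ i : Fin k, c (t + ι i) := by
    by_contra hcon
    push_neg at hcon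
    have hswap : ∑ t : Fin m, ∑ i : Fin k, c (t + ι i) = k := by
      rw [Finset.sum_comm]
      have h1 : ∀ i : Fin k, ∑ t : Fin m, c (t + ι i) = 1 := fun i => by
        rw [← hsum_c]
        exact Fintype.sum_equiv (Equiv.addRight (ι i)) _ _ fun t => rfl
      simp [h1]
    have hne : (Finset.univ : Finset (Fin m)).Nonempty := ⟨⟨0, hm1⟩, Finset.mem_univ _⟩
    have hlt : ∑ t : Fin m, ∑ i : Fin k, c (t + ι i) < ∑ _t : Fin m, (k:ℝ)/m :=
      Finset.sum_lt_sum_of_nonempty hne fun t _ => hcon t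
    rw [hswap, Finset.sum_const, Finset.card_univ, Fintype.card_fin, nsmul_eq_mul] at hlt
    have heq : (m:ℝ) * ((k:ℝ)/m) = k := by field_simp
    linarith
  obtain ⟨t, hts⟩ := havg
  set s : ℝ := ∑ i : Fin k, c (t + ι i) with hsdef
  have hs_pos : 0 < s := lt_of_lt_of_le (div_pos hkR hmR) hts
  -- the truncated vector
  set a : Fin k → Fin n → ℂ := fun i p => u (p, t + ι i) with ha
  set bb : Fin k → Fin m → ℂ := fun i j => if j = t + ι i then 1 else 0 with hbb
  set w0 : Fin n × Fin m → ℂ := ∑ i, prodVec (a i) (bb i) with hw0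
  have hw0app : ∀ x : Fin n × Fin m,
      w0 x = ∑ i, u (x.1, t + ι i) * (if x.2 = t + ι i then 1 else 0) := by
    intro x
    rw [hw0, Finset.sum_apply]
    exact Finset.sum_congr rfl fun i _ => rfl
  have hwin : ∀ i i' : Fin k, t + ι i = t + ι i' → i = i' := fun i i' h =>
    hιinj (add_right_injective t h)
  have hw0' : ∀ x : Fin n × Fin m, w0 x = u x ∨ w0 x = 0 := by
    intro x
    rw [hw0app]
    by_cases hex : ∃ i : Fin k, x.2 = t + ι i
    · obtain ⟨i1, hi1⟩ := hex
      left
      rw [Finset.sum_eq_single i1]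
      · rw [if_pos hi1, mul_one, ← hi1]
      · intro i _ hne
        rw [if_neg, mul_zero]
        intro hcon2
        exact hne (hwin i i1 (hcon2.symm.trans hi1))
      · simp
    · right
      push_neg at hex
      exact Finset.sum_eq_zero fun i _ => by rw [if_neg (hex i), mul_zero]
  -- inner products with the truncation
  have hipuw0 : ip u w0 = (s : ℂ) := by
    rw [ip]
    calc ∑ x : Fin n × Fin m, star (u x) * w0 x
        = ∑ x : Fin n × Fin m, ∑ i : Fin k,
            star (u x) * (u (x.1, t + ι i) * (if x.2 = t + ι i then 1 else 0)) := by
          refine Finset.sum_congr rfl fun x _ => ?_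
          rw [hw0app, Finset.mul_sum]
      _ = ∑ i : Fin k, ∑ x : Fin n × Fin m,
            star (u x) * (u (x.1, t + ι i) * (if x.2 = t + ι i then 1 else 0)) :=
          Finset.sum_comm
      _ = ∑ i : Fin k, ((c (t + ι i) : ℝ) : ℂ) := by
          refine Finset.sum_congr rfl fun i _ => ?_
          rw [Fintype.sum_prod_type]
          have hstep : ∀ p : Fin n,
              (∑ j : Fin m, star (u (p, j)) * (u (p, t + ι i) * (if j = t + ι i then 1 else 0)))
                = star (u (p, t + ι i)) * u (p, t + ι i) := by
            intro p
            rw [Finset.sum_eq_single (t + ι i)]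
            · rw [if_pos rfl, mul_one]
            · intro j _ hj; rw [if_neg hj, mul_zero, mul_zero]
            · simp
          rw [Finset.sum_congr rfl fun p _ => hstep p, hc]
          push_cast
          refine Finset.sum_congr rfl fun p _ => ?_
          rw [mul_comm]
          exact Complex.mul_conj _
      _ = (s : ℂ) := by rw [hsdef]; exact (Complex.ofReal_sum _ _).symm
  have hipw0w0 : ip w0 w0 = (s : ℂ) := by
    rw [← hipuw0, ip, ip]
    refine Finset.sum_congr rfl fun x _ => ?_
    rcases hw0' x with h | h
    · rw [h]
    · rw [h, mul_zero, mul_zero]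
  -- normalization
  set r : ℝ := (Real.sqrt s)⁻¹ with hr
  have hsq : Real.sqrt s * Real.sqrt s = s := Real.mul_self_sqrt hs_pos.le
  have hsqpos : 0 < Real.sqrt s := Real.sqrt_pos.mpr hs_pos
  have hrr : r * r * s = 1 := by
    rw [hr]
    field_simp
    rw [sq, hsq]
  set w : Fin n × Fin m → ℂ := fun x => (r : ℂ) * w0 x with hw
  have hipww : ip w w = 1 := by
    rw [hw, ip_smul_smul, hipw0w0]
    have h1 : star ((r:ℝ):ℂ) = ((r:ℝ):ℂ) := by simp
    rw [h1, ← Complex.ofReal_mul, ← Complex.ofReal_mul, hrr]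
    norm_num
  have hnrmw : nrm w = 1 := by rw [nrm, hipww]; simp
  have hSRw : SRle k w := by
    refine ⟨fun i p => (r:ℂ) * a i p, bb, ?_⟩
    funext x
    rw [Finset.sum_apply]
    show (r:ℂ) * w0 x = _
    rw [hw0app x, Finset.mul_sum]
    refine Finset.sum_congr rfl fun i _ => ?_
    show (r:ℂ) * (u (x.1, t + ι i) * (if x.2 = t + ι i then 1 else 0))
        = ((r:ℂ) * u (x.1, t + ι i)) * (if x.2 = t + ι i then 1 else 0)
    ring
  have hipuw : ip u w = ((r * s : ℝ) : ℂ) := by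
    have : ip u w = (r:ℂ) * ip u w0 := by
      rw [hw, ip, ip, Finset.mul_sum]
      exact Finset.sum_congr rfl fun x _ => by ring
    rw [this, hipuw0]
    push_cast
    ring
  -- eigen-expansion of the quadratic form
  set β : Fin n × Fin m → ℂ := fun j => ip (v j) w with hβ
  have hβi0 : Complex.normSq (β i0) = s := by
    have h1 : β i0 = ((r * s : ℝ) : ℂ) := hipuw
    rw [h1, Complex.normSq_ofReal]
    nlinarith [hrr]
  have hbsum : ∑ j, Complex.normSq (β j) = 1 := by
    have h := parseval_of_complete v hcomp w w
    rw [hipww] at h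
    have h2 : ∀ j, star (β j) * β j = ((Complex.normSq (β j) : ℝ) : ℂ) := fun j => by
      rw [mul_comm]; exact Complex.mul_conj _
    rw [Finset.sum_congr rfl fun j _ => h2 j] at h
    have h3 : ((∑ j, Complex.normSq (β j) : ℝ) : ℂ) = 1 := by push_cast; rw [← h]
    exact_mod_cast h3
  have hxw : ∀ q, X.mulVec w q = ∑ j, β j * ((μ j : ℂ) * v j q) := by
    intro q
    have hw_ex : ∀ p, w p = ∑ j, β j * v j p := fun p => expand_of_complete v hcomp w p
    calc X.mulVec w q = ∑ p, X q p * w p := rfl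
      _ = ∑ p, ∑ j, X q p * (β j * v j p) := by
          refine Finset.sum_congr rfl fun p _ => ?_
          rw [hw_ex p, Finset.mul_sum]
      _ = ∑ j, ∑ p, X q p * (β j * v j p) := Finset.sum_comm
      _ = ∑ j, β j * (∑ p, X q p * v j p) := by
          refine Finset.sum_congr rfl fun j _ => ?_
          rw [Finset.mul_sum]
          exact Finset.sum_congr rfl fun p _ => by ring
      _ = ∑ j, β j * ((μ j : ℂ) * v j q) := by
          refine Finset.sum_congr rfl fun j _ => ?_
          congr 1
          have h2 := congrFun (heig j) q
          simpa [Matrix.mulVec, dotProduct] using h2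
  have hquad : (ip w (X.mulVec w)).re = ∑ j, μ j * Complex.normSq (β j) := by
    have h1 : ip w (X.mulVec w) = ∑ j, (((μ j * Complex.normSq (β j) : ℝ)) : ℂ) := by
      calc ip w (X.mulVec w)
          = ∑ q, star (w q) * ∑ j, β j * ((μ j : ℂ) * v j q) := by
            rw [ip]
            exact Finset.sum_congr rfl fun q _ => by rw [hxw q]
        _ = ∑ q, ∑ j, star (w q) * (β j * ((μ j : ℂ) * v j q)) := by
            exact Finset.sum_congr rfl fun q _ => Finset.mul_sum _ _ _
        _ = ∑ j, ∑ q, star (w q) * (β j * ((μ j : ℂ) * v j q)) := Finset.sum_comm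
        _ = ∑ j, β j * (μ j : ℂ) * ip w (v j) := by
            refine Finset.sum_congr rfl fun j _ => ?_
            rw [ip, Finset.mul_sum]
            exact Finset.sum_congr rfl fun q _ => by ring
        _ = ∑ j, (((μ j * Complex.normSq (β j) : ℝ)) : ℂ) := by
            refine Finset.sum_congr rfl fun j _ => ?_
            rw [ip_comm w (v j)]
            have h3 : β j * star (β j) = ((Complex.normSq (β j) : ℝ) : ℂ) := Complex.mul_conj _
            have hips : ip (v j) w = β j := rfl
            push_cast
            rw [hips]
            calc β j * (μ j : ℂ) * star (β j)
                = (μ j : ℂ) * (β j * star (β j)) := by ring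
              _ = (μ j : ℂ) * ((Complex.normSq (β j) : ℝ) : ℂ) := by rw [h3]
    rw [h1, Complex.re_sum]
    exact Finset.sum_congr rfl fun j _ => by simp
  -- block positivity gives the key inequality
  have hpos : 0 ≤ ∑ j, μ j * Complex.normSq (β j) := by
    rw [← hquad]; exact hbp w hnrmw hSRw
  have herase : ∑ j ∈ Finset.univ.erase i0, Complex.normSq (β j) = 1 - s := by
    have h0 : Complex.normSq (β i0) + ∑ j ∈ Finset.univ.erase i0, Complex.normSq (β j)
        = ∑ j, Complex.normSq (β j) :=
      Finset.add_sum_erase Finset.univ (fun j => Complex.normSq (β j)) (Finset.mem_univ i0)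
    rw [hbsum, hβi0] at h0
    linarith
  have hE : ∑ j, μ j * Complex.normSq (β j) ≤ lmin * s + lmax * (1 - s) := by
    have hsplitE : ∑ j, μ j * Complex.normSq (β j)
        = μ i0 * Complex.normSq (β i0)
          + ∑ j ∈ Finset.univ.erase i0, μ j * Complex.normSq (β j) :=
      (Finset.add_sum_erase Finset.univ (fun j => μ j * Complex.normSq (β j))
        (Finset.mem_univ i0)).symm
    rw [hsplitE]
    have h1 : μ i0 * Complex.normSq (β i0) = lmin * s := by rw [hβi0, hi0]
    have h2 : ∑ j ∈ Finset.univ.erase i0, μ j * Complex.normSq (β j)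
        ≤ lmax * (1 - s) := by
      calc ∑ j ∈ Finset.univ.erase i0, μ j * Complex.normSq (β j)
          ≤ ∑ j ∈ Finset.univ.erase i0, lmax * Complex.normSq (β j) :=
            Finset.sum_le_sum fun j _ =>
              mul_le_mul_of_nonneg_right (hmax.2 ⟨j, rfl⟩) (Complex.normSq_nonneg _)
        _ = lmax * (1 - s) := by rw [← Finset.mul_sum, herase]
    linarith
  have key : 0 ≤ lmin * s + lmax * (1 - s) := le_trans hpos hE
  -- arithmetic conclusion
  clear_value s
  have hms : 1 ≤ (m:ℝ)/k * s := by
    have h1 := mul_le_mul_of_nonneg_left hts (le_of_lt (div_pos hmR hkR))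
    have heq : (m:ℝ)/k * ((k:ℝ)/m) = 1 := by field_simp
    linarith
  have hfin : (1 - (m:ℝ)/k) * lmax ≤ lmin := by
    have hstep : (1 - (m:ℝ)/k) * lmax * s ≤ lmin * s := by
      have h1 : (1 - (m:ℝ)/k) * lmax * s ≤ lmax * (s - 1) := by
        nlinarith [mul_nonneg hlmax.le (sub_nonneg.mpr hms)]
      linarith [key, h1]
    exact le_of_mul_le_mul_right hstep hs_pos
  rw [le_div_iff₀ hlmax]
  linarith [hfin]
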